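/- Let U ∈ R^{n×n} be nonsingular with singular values σ₁ ≥ … ≥ σ_n > 0 and condition number κ = σ₁/σ_n. Then Φ(U) = exp(Σᵢ σᵢ²/2)/∏ᵢ σᵢ ≥ (e^{n/2}/2)(κ + 1/κ), and in particular 2e^{-n/2}Φ(U) ≥ κ. -/

import Mathlib

open Matrix

private lemma exp_mul_le (t : ℝ) : Real.exp 1 * t ≤ Real.exp t := by
  have h := Real.add_one_le_exp (t - 1)
  have : Real.exp t = Real.exp 1 * Real.exp (t - 1) := by
    rw [← Real.exp_add]; ring_nf
  rw [this]
  nlinarith [Real.exp_pos (1:ℝ), h]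

private lemma sqrt_e_le (x : ℝ) (hx : 0 < x) :
    Real.exp (1/2 : ℝ) ≤ Real.exp (x ^ 2 / 2) / x := by
  rw [le_div_iff₀ hx]
  have h : Real.exp (x ^ 2 / 2) = Real.exp (1/2) * Real.exp ((x ^ 2 - 1) / 2) := by
    rw [← Real.exp_add]; ring_nf
  have h2 := Real.add_one_le_exp ((x ^ 2 - 1) / 2)
  have h3 : x ≤ (x ^ 2 - 1) / 2 + 1 := by nlinarith [sq_nonneg (x - 1)]
  rw [h]
  have := Real.exp_pos (1/2 : ℝ)
  nlinarith

/-- Theorem 2 (lower bound): if `U` is nonsingular with singular values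
`σ₁ ≥ … ≥ σ_n > 0` and condition number `κ = σ₁/σ_n`, then
`Φ(U) ≥ (e^{n/2}/2)(κ + 1/κ)`, and in particular `2e^{-n/2}Φ(U) ≥ κ`. -/
theorem Phi_ge_condition_number {n : ℕ} (hn : 0 < n) (U : Matrix (Fin n) (Fin n) ℝ)
    (hU : IsUnit U.det) (σ : Fin n → ℝ) (hσpos : ∀ i, 0 < σ i)
    (hsorted : ∀ i j : Fin n, i ≤ j → σ j ≤ σ i)
    (P Q : Matrix (Fin n) (Fin n) ℝ)
    (hP : P ∈ Matrix.orthogonalGroup (Fin n) ℝ)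
    (hQ : Q ∈ Matrix.orthogonalGroup (Fin n) ℝ)
    (hsvd : U = P * Matrix.diagonal σ * Q)
    (κ : ℝ) (hκ : κ = σ ⟨0, hn⟩ / σ ⟨n - 1, Nat.sub_lt hn one_pos⟩) :
    (Real.exp ((n : ℝ) / 2) / 2) * (κ + 1 / κ) ≤
        Real.exp ((∑ i, ∑ j, (U i j) ^ 2) / 2) / Real.sqrt ((Uᵀ * U).det) ∧
    κ ≤ 2 * Real.exp (-(n : ℝ) / 2) *
        (Real.exp ((∑ i, ∑ j, (U i j) ^ 2) / 2) / Real.sqrt ((Uᵀ * U).det)) := by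
  -- orthogonality facts
  have hPt : Pᵀ * P = 1 := by simpa [Matrix.star_eq_conjTranspose] using hP.1
  have hQt : Qᵀ * Q = 1 := by simpa [Matrix.star_eq_conjTranspose] using hQ.1
  have hQt' : Q * Qᵀ = 1 := by simpa [Matrix.star_eq_conjTranspose] using hQ.2
  -- Frobenius norm squared equals sum of σ i ^ 2
  have hsum : ∑ i, ∑ j, (U i j) ^ 2 = ∑ i, σ i ^ 2 := by
    have htr : ∑ i, ∑ j, (U i j) ^ 2 = (Uᵀ * U).trace := by
      simp only [Matrix.trace, Matrix.mul_apply, Matrix.diag, Matrix.transpose_apply, sq]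
      rw [Finset.sum_comm]
    rw [htr, hsvd]
    have hkey : (P * Matrix.diagonal σ * Q)ᵀ * (P * Matrix.diagonal σ * Q)
        = Qᵀ * (Matrix.diagonal σ * Matrix.diagonal σ) * Q := by
      simp only [Matrix.transpose_mul, Matrix.diagonal_transpose, Matrix.mul_assoc]
      rw [← Matrix.mul_assoc Pᵀ P, hPt, Matrix.one_mul]
    rw [hkey, Matrix.trace_mul_comm, ← Matrix.mul_assoc, hQt', Matrix.one_mul,
      Matrix.diagonal_mul_diagonal, Matrix.trace_diagonal]
    simp [sq]
  -- determinant fact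
  have hprodpos : 0 < ∏ i, σ i := Finset.prod_pos fun i _ => hσpos i
  have hdet : Real.sqrt ((Uᵀ * U).det) = ∏ i, σ i := by
    have hDet : (Uᵀ * U).det = (∏ i, σ i) ^ 2 := by
      rw [hsvd, Matrix.det_mul, Matrix.det_transpose]
      have h1 : (P * Matrix.diagonal σ * Q).det = P.det * Q.det * ∏ i, σ i := by
        rw [Matrix.det_mul, Matrix.det_mul, Matrix.det_diagonal]; ring
      rw [h1]
      have hP1 : P.det * P.det = 1 := by
        have := congrArg Matrix.det hPt
        rwa [Matrix.det_mul, Matrix.det_transpose, Matrix.det_one] at this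
      have hQ1 : Q.det * Q.det = 1 := by
        have := congrArg Matrix.det hQt
        rwa [Matrix.det_mul, Matrix.det_transpose, Matrix.det_one] at this
      have : (P.det * Q.det * ∏ i, σ i) * (P.det * Q.det * ∏ i, σ i)
          = (P.det * P.det) * ((Q.det * Q.det) * (∏ i, σ i) ^ 2) := by ring
      rw [this, hP1, hQ1]; ring
    rw [hDet, Real.sqrt_sq hprodpos.le]
  -- Φ as a product
  set g : Fin n → ℝ := fun i => Real.exp (σ i ^ 2 / 2) / σ i with hg
  have hgpos : ∀ i, 0 < g i := fun i => div_pos (Real.exp_pos _) (hσpos i)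
  have hPhi : Real.exp ((∑ i, ∑ j, (U i j) ^ 2) / 2) / Real.sqrt ((Uᵀ * U).det)
      = ∏ i, g i := by
    rw [hsum, hdet]
    rw [Finset.sum_div, Real.exp_sum, ← Finset.prod_div_distrib]
  -- key indices
  set i0 : Fin n := ⟨0, hn⟩ with hi0
  set i1 : Fin n := ⟨n - 1, Nat.sub_lt hn one_pos⟩ with hi1
  set a : ℝ := σ i0 with ha
  set b : ℝ := σ i1 with hb
  have hapos : 0 < a := hσpos i0
  have hbpos : 0 < b := hσpos i1
  have hκpos : 0 < κ := by rw [hκ]; exact div_pos hapos hbpos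
  have hκinv : 1 / κ = b / a := by rw [hκ]; field_simp
  -- pair bound : exp((a²+b²)/2)/(a*b) ≥ (e/2)(κ + 1/κ)
  have hpair : (Real.exp 1 / 2) * (κ + 1 / κ) ≤
      Real.exp ((a ^ 2 + b ^ 2) / 2) / (a * b) := by
    have ht := exp_mul_le ((a ^ 2 + b ^ 2) / 2)
    have heq : (Real.exp 1 / 2) * (κ + 1 / κ) =
        Real.exp 1 * ((a ^ 2 + b ^ 2) / 2) / (a * b) := by
      rw [hκ]
      field_simp [hapos.ne', hbpos.ne']
    rw [heq]
    gcongr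
  -- main bound
  have main : (Real.exp ((n : ℝ) / 2) / 2) * (κ + 1 / κ) ≤ ∏ i, g i := by
    rcases Nat.lt_or_ge n 2 with h2 | h2
    · -- n = 1
      have hn1 : n = 1 := by omega
      subst hn1
      have hi : i1 = i0 := by rfl
      have hab : a = b := by rw [ha, hb, hi]
      have hκ1 : κ = 1 := by rw [hκ]; field_simp [← ha, ← hb, hab]; exact hab
      have : ∏ i, g i = g i0 := Fin.prod_univ_one g
      rw [this, hκ1]
      have := sqrt_e_le a hapos
      simp only [Nat.cast_one]
      calc Real.exp ((1:ℝ)/2) / 2 * (1 + 1/1) = Real.exp ((1:ℝ)/2) := by norm_num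
        _ ≤ g i0 := this
    · -- n ≥ 2
      have h2' : 1 < n := h2
      have hne : i0 ≠ i1 := by
        simp only [hi0, hi1, Fin.ne_iff_vne]
        omega
      have hi1mem : i1 ∈ (Finset.univ.erase i0) := by
        simp [hne.symm]
      have hsplit : ∏ i, g i = g i0 * (g i1 * ∏ i ∈ (Finset.univ.erase i0).erase i1, g i) := by
        rw [Finset.mul_prod_erase _ g hi1mem, Finset.mul_prod_erase _ g (Finset.mem_univ i0)]
      have hcard : ((Finset.univ.erase i0).erase i1).card = n - 2 := by
        rw [Finset.card_erase_of_mem hi1mem, Finset.card_erase_of_mem (Finset.mem_univ i0)]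
        simp [Finset.card_univ]
        omega
      have hrest : Real.exp ((1:ℝ)/2) ^ (n - 2) ≤ ∏ i ∈ (Finset.univ.erase i0).erase i1, g i := by
        calc Real.exp ((1:ℝ)/2) ^ (n - 2)
            = ∏ _i ∈ (Finset.univ.erase i0).erase i1, Real.exp ((1:ℝ)/2) := by
              rw [Finset.prod_const, hcard]
          _ ≤ ∏ i ∈ (Finset.univ.erase i0).erase i1, g i :=
              Finset.prod_le_prod (fun i _ => (Real.exp_pos _).le)
                (fun i _ => sqrt_e_le (σ i) (hσpos i))
      have hg01 : g i0 * g i1 = Real.exp ((a ^ 2 + b ^ 2) / 2) / (a * b) := by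
        rw [hg]
        simp only
        rw [div_mul_div_comm, ← Real.exp_add]
        ring_nf
        rfl
      have hκsum : 0 < κ + 1 / κ := by positivity
      have hepow : Real.exp 1 * Real.exp ((1:ℝ)/2) ^ (n - 2) = Real.exp ((n : ℝ) / 2) := by
        rw [← Real.exp_nat_mul, ← Real.exp_add]
        congr 1
        have : (2 : ℕ) ≤ n := h2
        push_cast [Nat.cast_sub this]
        ring
      rw [hsplit, ← mul_assoc]
      have step1 : (Real.exp 1 / 2) * (κ + 1 / κ) ≤ g i0 * g i1 := by rw [hg01]; exact hpair
      calc (Real.exp ((n : ℝ) / 2) / 2) * (κ + 1 / κ)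
          = ((Real.exp 1 / 2) * (κ + 1 / κ)) * Real.exp ((1:ℝ)/2) ^ (n - 2) := by
            rw [← hepow]; ring
        _ ≤ (g i0 * g i1) * ∏ i ∈ (Finset.univ.erase i0).erase i1, g i := by
            apply mul_le_mul step1 hrest (by positivity)
            exact le_of_lt (mul_pos (hgpos i0) (hgpos i1))
  constructor
  · rw [hPhi]; exact main
  · rw [hPhi]
    have hexp : 0 < Real.exp ((n : ℝ) / 2) := Real.exp_pos _
    have hkey : Real.exp (-(n : ℝ) / 2) = (Real.exp ((n : ℝ) / 2))⁻¹ := by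
      rw [← Real.exp_neg]; ring_nf
    have h2 : κ + 1 / κ ≤ 2 * Real.exp (-(n : ℝ) / 2) * ∏ i, g i := by
      have hstep := mul_le_mul_of_nonneg_left main
        (le_of_lt (by positivity : (0:ℝ) < 2 / Real.exp ((n : ℝ) / 2)))
      calc κ + 1 / κ
          = 2 / Real.exp ((n : ℝ) / 2) * (Real.exp ((n : ℝ) / 2) / 2 * (κ + 1 / κ)) := by
            field_simp
        _ ≤ 2 / Real.exp ((n : ℝ) / 2) * ∏ i, g i := hstep
        _ = 2 * Real.exp (-(n : ℝ) / 2) * ∏ i, g i := by rw [hkey]; ring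
    have hκle : κ ≤ κ + 1 / κ := le_add_of_nonneg_right (by positivity)
    exact hκle.trans h2
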